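/- Let n ≥ q ≥ 1 be integers, let v ∈ ℝⁿ have all entries positive, let X ∈ F_v, and let X⊥ be an n×(n−q) real matrix such that (X X⊥) is orthogonal. Then for every V ∈ T_X one has (X + V)ᵀ v ≠ 0. -/

import Mathlib

open Matrix

/-- For `X ∈ F_v` and `X⊥` with `(X X⊥)` orthogonal, every
`V ∈ T_X = {XΩ + X⊥K : Ωᵀ = −Ω, K (Xᵀv) = 0}` satisfies `(X + V)ᵀ v ≠ 0`. -/
theorem stmt_10 (n q : ℕ) (hq : 1 ≤ q) (hnq : q ≤ n)
    (v : Fin n → ℝ) (hv : ∀ i, 0 < v i)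
    (X : Matrix (Fin n) (Fin q) ℝ)
    (hX : Xᵀ * X = 1 ∧ ∃ c : Fin q → ℝ, X *ᵥ c = v)
    (Xp : Matrix (Fin n) (Fin (n - q)) ℝ)
    (hO : (fromCols X Xp)ᵀ * fromCols X Xp = 1)
    (V : Matrix (Fin n) (Fin q) ℝ)
    (hV : ∃ (Ω : Matrix (Fin q) (Fin q) ℝ) (K : Matrix (Fin (n - q)) (Fin q) ℝ),
      Ωᵀ = -Ω ∧ K *ᵥ (Xᵀ *ᵥ v) = 0 ∧ V = X * Ω + Xp * K) :
    (X + V)ᵀ *ᵥ v ≠ 0 := by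
  obtain ⟨hXX, c, hc⟩ := hX
  obtain ⟨Ω, K, hΩ, hK, hVeq⟩ := hV
  -- extract XpᵀX = 0 from orthogonality
  rw [transpose_fromCols, fromRows_mul_fromCols, ← fromBlocks_one] at hO
  have hO21 : Xpᵀ * X = 0 := by
    have := congrArg Matrix.toBlocks₂₁ hO
    simpa only [Matrix.toBlocks_fromBlocks₂₁] using this
  set w : Fin q → ℝ := Xᵀ *ᵥ v with hw
  -- c = w
  have hcw : c = w := by
    rw [hw, ← hc, mulVec_mulVec, hXX, one_mulVec]
  -- Xpᵀ v = 0
  have hXpv : Xpᵀ *ᵥ v = 0 := by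
    rw [← hc, mulVec_mulVec, hO21, zero_mulVec]
  -- main computation
  have hmain : (X + V)ᵀ *ᵥ v = w - Ω *ᵥ w := by
    rw [hVeq]
    simp only [transpose_add, transpose_mul, add_mulVec, ← mulVec_mulVec]
    rw [hXpv, mulVec_zero, add_zero, hΩ, neg_mulVec, ← hw]
    abel
  intro h
  rw [hmain, sub_eq_zero] at h
  -- skew symmetry forces w = 0
  have hdot : w ⬝ᵥ (Ω *ᵥ w) = 0 := by
    have h1 : w ⬝ᵥ (Ω *ᵥ w) = (Ωᵀ *ᵥ w) ⬝ᵥ w := by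
      rw [dotProduct_mulVec, mulVec_transpose]
    rw [hΩ, neg_mulVec, neg_dotProduct, dotProduct_comm (Ω *ᵥ w)] at h1
    linarith
  rw [← h] at hdot
  have hw0 : w = 0 := by
    have := dotProduct_self_eq_zero.mp hdot
    exact this
  have : v = 0 := by rw [← hc, hcw, hw0, mulVec_zero]
  have h0 : (0:ℝ) < v ⟨0, lt_of_lt_of_le hq hnq⟩ := hv _
  rw [this] at h0
  simp at h0
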